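/- The Cayley graph of τ_m on (ZMod 2)^{2m} (vertices x,y adjacent iff τ_m(x+y)=1) is a strongly regular graph with parameters v = 4^m, k = 2^{2m−1} − 2^{m−1}, λ = μ = 2^{2m−2} − 2^{m−1}. -/

import Mathlib

/-- The sign-of-square function `σ_m` on bit strings: the parity of the number of
bit-pairs equal to `01`. -/
def sigma (m : ℕ) (i : Fin (2 * m) → ZMod 2) : ZMod 2 :=
  ∑ j : Fin m,
    if i ⟨2 * j.1, by have := j.2; omega⟩ = 0 ∧ i ⟨2 * j.1 + 1, by have := j.2; omega⟩ = 1
    then 1 else 0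

/-- The tail of a bit string after removing its leading bit-pair. -/
def tail2 (m : ℕ) (i : Fin (2 * (m + 1)) → ZMod 2) (j : Fin (2 * m)) : ZMod 2 :=
  i ⟨j.1 + 2, by have := j.2; omega⟩

/-- The non-diagonal-symmetry function `τ_m`, defined recursively:
`τ_m(00⊙i) = τ_{m-1}(i)`, `τ_m(01⊙i) = σ_{m-1}(i)`, `τ_m(10⊙i) = σ_{m-1}(i) + 1`,
`τ_m(11⊙i) = τ_{m-1}(i)`; in particular `τ_1(10) = 1` and `τ_1 = 0` otherwise. -/
def tau : (m : ℕ) → (Fin (2 * m) → ZMod 2) → ZMod 2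
  | 0, _ => 0
  | m + 1, i =>
    if i ⟨0, by omega⟩ = 0 ∧ i ⟨1, by omega⟩ = 0 then tau m (tail2 m i)
    else if i ⟨0, by omega⟩ = 0 ∧ i ⟨1, by omega⟩ = 1 then sigma m (tail2 m i)
    else if i ⟨0, by omega⟩ = 1 ∧ i ⟨1, by omega⟩ = 0 then sigma m (tail2 m i) + 1
    else tau m (tail2 m i)

/-- The Cayley graph of a Boolean function `f`: vertices `x ≠ y` adjacent iff `f (x + y) = 1`. -/
def cayley (n : ℕ) (f : (Fin n → ZMod 2) → ZMod 2) : SimpleGraph (Fin n → ZMod 2) where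
  Adj x y := x ≠ y ∧ f (x + y) = 1
  symm := ⟨by intro x y h; exact ⟨h.1.symm, by rw [add_comm]; exact h.2⟩⟩
  loopless := ⟨by intro x h; exact h.1 rfl⟩

instance (n : ℕ) (f : (Fin n → ZMod 2) → ZMod 2) : DecidableRel (cayley n f).Adj :=
  fun _ _ => instDecidableAnd

-- auxiliary
def cons2 (m : ℕ) (c0 c1 : ZMod 2) (t : Fin (2 * m) → ZMod 2) : Fin (2 * (m + 1)) → ZMod 2 :=
  fun j => if h : j.1 = 0 then c0 else if h1 : j.1 = 1 then c1 else t ⟨j.1 - 2, by have := j.2; omega⟩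

@[simp] lemma cons2_zero (m : ℕ) (c0 c1 : ZMod 2) (t : Fin (2 * m) → ZMod 2) :
    cons2 m c0 c1 t ⟨0, by omega⟩ = c0 := rfl

@[simp] lemma cons2_one (m : ℕ) (c0 c1 : ZMod 2) (t : Fin (2 * m) → ZMod 2) :
    cons2 m c0 c1 t ⟨1, by omega⟩ = c1 := rfl

@[simp] lemma tail2_cons2 (m : ℕ) (c0 c1 : ZMod 2) (t : Fin (2 * m) → ZMod 2) :
    tail2 m (cons2 m c0 c1 t) = t := by
  funext j
  simp only [tail2, cons2]
  rcases j with ⟨jv, hj⟩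
  rw [dif_neg (by omega), dif_neg (by omega)]
  exact congrArg t (by ext; simp)

lemma cons2_add (m : ℕ) (c0 c1 d0 d1 : ZMod 2) (t b : Fin (2 * m) → ZMod 2) :
    cons2 m c0 c1 t + cons2 m d0 d1 b = cons2 m (c0 + d0) (c1 + d1) (t + b) := by
  funext j
  rcases j with ⟨jv, hj⟩
  simp only [Pi.add_apply, cons2]
  by_cases h0 : jv = 0
  · subst h0; rfl
  · by_cases h1 : jv = 1
    · subst h1; rfl
    · rw [dif_neg h0, dif_neg h1, dif_neg h0, dif_neg h1, dif_neg h0, dif_neg h1]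

def consEquiv (m : ℕ) : ((ZMod 2 × ZMod 2) × (Fin (2 * m) → ZMod 2)) ≃ (Fin (2 * (m + 1)) → ZMod 2) where
  toFun p := cons2 m p.1.1 p.1.2 p.2
  invFun x := ((x ⟨0, by omega⟩, x ⟨1, by omega⟩), tail2 m x)
  left_inv p := by
    rcases p with ⟨⟨c0, c1⟩, t⟩
    simp [cons2, Fin.val_one']
  right_inv x := by
    funext j
    rcases j with ⟨jv, hj⟩
    simp only [cons2]
    by_cases h0 : jv = 0
    · subst h0; rw [dif_pos rfl]
    · by_cases h1 : jv = 1
      · subst h1; rw [dif_neg (by omega), dif_pos rfl]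
      · rw [dif_neg h0, dif_neg h1]
        simp only [tail2]
        exact congrArg x (by ext; simp; omega)

lemma sigma_cons2 (m : ℕ) (c0 c1 : ZMod 2) (t : Fin (2 * m) → ZMod 2) :
    sigma (m + 1) (cons2 m c0 c1 t) = (if c0 = 0 ∧ c1 = 1 then 1 else 0) + sigma m t := by
  rw [sigma, Fin.sum_univ_succ]
  congr 1

lemma tau_cons2 (m : ℕ) (c0 c1 : ZMod 2) (t : Fin (2 * m) → ZMod 2) :
    tau (m + 1) (cons2 m c0 c1 t) =
      if c0 = 0 ∧ c1 = 0 then tau m t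
      else if c0 = 0 ∧ c1 = 1 then sigma m t
      else if c0 = 1 ∧ c1 = 0 then sigma m t + 1
      else tau m t := by
  rw [tau]
  simp [tail2_cons2, cons2, Fin.val_one']

@[simp] lemma tau_zero (m : ℕ) : tau m 0 = 0 := by
  induction m with
  | zero => rfl
  | succ m ih =>
      rw [tau]
      have h0 : (0 : Fin (2 * (m+1)) → ZMod 2) ⟨0, by omega⟩ = 0 := rfl
      have ht : tail2 m (0 : Fin (2 * (m+1)) → ZMod 2) = 0 := rfl
      simp [h0, ht, ih]

-- specialized recursion lemmas
lemma sigma_cons2_00 (m : ℕ) (t : Fin (2 * m) → ZMod 2) :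
    sigma (m + 1) (cons2 m 0 0 t) = sigma m t := by rw [sigma_cons2]; simp
lemma sigma_cons2_01 (m : ℕ) (t : Fin (2 * m) → ZMod 2) :
    sigma (m + 1) (cons2 m 0 1 t) = 1 + sigma m t := by rw [sigma_cons2]; simp
lemma sigma_cons2_10 (m : ℕ) (t : Fin (2 * m) → ZMod 2) :
    sigma (m + 1) (cons2 m 1 0 t) = sigma m t := by rw [sigma_cons2]; simp
lemma sigma_cons2_11 (m : ℕ) (t : Fin (2 * m) → ZMod 2) :
    sigma (m + 1) (cons2 m 1 1 t) = sigma m t := by rw [sigma_cons2]; simp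

lemma tau_cons2_00 (m : ℕ) (t : Fin (2 * m) → ZMod 2) :
    tau (m + 1) (cons2 m 0 0 t) = tau m t := by rw [tau_cons2]; simp
lemma tau_cons2_01 (m : ℕ) (t : Fin (2 * m) → ZMod 2) :
    tau (m + 1) (cons2 m 0 1 t) = sigma m t := by rw [tau_cons2]; simp
lemma tau_cons2_10 (m : ℕ) (t : Fin (2 * m) → ZMod 2) :
    tau (m + 1) (cons2 m 1 0 t) = sigma m t + 1 := by rw [tau_cons2]; simp
lemma tau_cons2_11 (m : ℕ) (t : Fin (2 * m) → ZMod 2) :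
    tau (m + 1) (cons2 m 1 1 t) = tau m t := by rw [tau_cons2]; simp

lemma cons2_zero_zero_zero (m : ℕ) : cons2 m 0 0 0 = 0 := by
  funext j; rcases j with ⟨jv, hj⟩
  simp only [cons2]
  split
  · rfl
  · split <;> rfl

lemma card_congr' {α : Type*} [Fintype α] {p q : α → Prop} [DecidablePred p] [DecidablePred q]
    (h : ∀ a, p a ↔ q a) : Fintype.card {x // p x} = Fintype.card {x // q x} :=
  Fintype.card_congr (Equiv.subtypeEquivRight h)

-- ZMod 2 pointwise facts
lemma z2_shift_eq (u v : ZMod 2) : (u ≠ v) ↔ (u ≠ v) := Iff.rfl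
lemma z2_ne_flipR (u v : ZMod 2) : (u ≠ v + 1) ↔ ¬ (u ≠ v) := by revert u v; decide
lemma z2_ne_flipR' (u v : ZMod 2) : (u ≠ 1 + v) ↔ ¬ (u ≠ v) := by revert u v; decide
lemma z2_ne_flipL (u v : ZMod 2) : (u + 1 ≠ v) ↔ ¬ (u ≠ v) := by revert u v; decide
lemma z2_ne_flipL' (u v : ZMod 2) : (1 + u ≠ v) ↔ ¬ (u ≠ v) := by revert u v; decide
lemma z2_ne_shift1 (u v : ZMod 2) : (1 + u ≠ 1 + v) ↔ (u ≠ v) := by revert u v; decide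
lemma z2_ne_shift1' (u v : ZMod 2) : (u + 1 ≠ v + 1) ↔ (u ≠ v) := by revert u v; decide
lemma z2_ne_mix (u v : ZMod 2) : (u + 1 ≠ 1 + v) ↔ (u ≠ v) := by revert u v; decide
lemma z2_ne_mix' (u v : ZMod 2) : (1 + u ≠ v + 1) ↔ (u ≠ v) := by revert u v; decide

lemma card_self_ne (m : ℕ) (f : (Fin (2 * m) → ZMod 2) → ZMod 2) [DecidableEq (ZMod 2)] :
    Fintype.card {t // f t ≠ f t} = 0 := by
  simp

lemma card_split (m : ℕ) (p : (Fin (2 * (m + 1)) → ZMod 2) → Prop) [DecidablePred p] :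
    Fintype.card {x // p x}
      = Fintype.card {t // p (cons2 m 0 0 t)} + Fintype.card {t // p (cons2 m 0 1 t)}
      + (Fintype.card {t // p (cons2 m 1 0 t)} + Fintype.card {t // p (cons2 m 1 1 t)}) := by
  have e1 : {x // p x} ≃ {y : (ZMod 2 × ZMod 2) × (Fin (2 * m) → ZMod 2) // p (consEquiv m y)} :=
    ((consEquiv m).subtypeEquiv (fun y => Iff.rfl)).symm
  rw [Fintype.card_congr e1]
  have e2 : {y : (ZMod 2 × ZMod 2) × (Fin (2 * m) → ZMod 2) // p (consEquiv m y)}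
      ≃ (c : ZMod 2 × ZMod 2) × {t // p (cons2 m c.1 c.2 t)} :=
    Equiv.subtypeProdEquivSigmaSubtype (fun (c : ZMod 2 × ZMod 2) t => p (cons2 m c.1 c.2 t))
  rw [Fintype.card_congr e2, Fintype.card_sigma]
  have huniv : (Finset.univ : Finset (ZMod 2 × ZMod 2)) = {(0,0),(0,1),(1,0),(1,1)} := by decide
  rw [huniv, Finset.sum_insert (by decide), Finset.sum_insert (by decide),
    Finset.sum_insert (by decide), Finset.sum_singleton]
  norm_num
  omega

lemma card_V (m : ℕ) : Fintype.card (Fin (2 * m) → ZMod 2) = 4 ^ m := by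
  simp [Fintype.card_fun]
  rw [show 4 = 2^2 by norm_num, ← pow_mul, mul_comm]

lemma card_compl' (m : ℕ) (p : (Fin (2 * m) → ZMod 2) → Prop) [DecidablePred p] :
    Fintype.card {t // ¬ p t} = 4 ^ m - Fintype.card {t // p t} := by
  rw [Fintype.card_subtype_compl, card_V]

lemma card_le' (m : ℕ) (p : (Fin (2 * m) → ZMod 2) → Prop) [DecidablePred p] :
    Fintype.card {t // p t} ≤ 4 ^ m := by
  rw [← card_V m]; exact Fintype.card_subtype_le _

lemma z2_11 : (1 : ZMod 2) + 1 = 0 := by decide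
lemma z2_cases (x : ZMod 2) : x = 0 ∨ x = 1 := by revert x; decide

lemma sigma_deriv (m : ℕ) (b : Fin (2 * m) → ZMod 2) (hb : b ≠ 0) :
    Fintype.card {t // sigma m t ≠ sigma m (t + b)} = 2 ^ (2 * m - 1) := by
  induction m with
  | zero => exact absurd (funext fun j => absurd j.2 (by omega)) hb
  | succ m ih =>
    obtain ⟨⟨⟨d0, d1⟩, b'⟩, rfl⟩ := (consEquiv m).surjective b
    simp only [consEquiv, Equiv.coe_fn_mk] at hb ⊢
    erw [card_split m (fun x => sigma (m+1) x ≠ sigma (m+1) (x + cons2 m d0 d1 b'))]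
    have hA := card_le' m (fun t => sigma m t ≠ sigma m (t + b'))
    have hc := card_compl' m (fun t => sigma m t ≠ sigma m (t + b'))
    have hpow : (2:ℕ) ^ (2 * (m+1) - 1) = 2 * 4 ^ m := by
      rw [show 2*(m+1)-1 = 2*m+1 by omega, pow_succ, pow_mul]
      norm_num [mul_comm]
    rcases z2_cases d0 with rfl | rfl <;> rcases z2_cases d1 with rfl | rfl
    · -- d = (0,0)
      have hb' : b' ≠ 0 := fun h => hb (by rw [h, cons2_zero_zero_zero])
      rcases m with _ | m
      · exact absurd (funext fun j => absurd j.2 (by omega)) hb'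
      have e00 : Fintype.card {t // sigma (m+1+1) (cons2 (m+1) 0 0 t) ≠ sigma (m+1+1) (cons2 (m+1) 0 0 t + cons2 (m+1) 0 0 b')}
          = Fintype.card {t // sigma (m+1) t ≠ sigma (m+1) (t + b')} :=
        card_congr' fun t => by simp only [cons2_add, add_zero, zero_add, z2_11, sigma_cons2_00, sigma_cons2_01, sigma_cons2_10, sigma_cons2_11, z2_ne_shift1, z2_ne_flipR', z2_ne_flipL', not_not]
      have e01 : Fintype.card {t // sigma (m+1+1) (cons2 (m+1) 0 1 t) ≠ sigma (m+1+1) (cons2 (m+1) 0 1 t + cons2 (m+1) 0 0 b')}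
          = Fintype.card {t // sigma (m+1) t ≠ sigma (m+1) (t + b')} :=
        card_congr' fun t => by simp only [cons2_add, add_zero, zero_add, z2_11, sigma_cons2_00, sigma_cons2_01, sigma_cons2_10, sigma_cons2_11, z2_ne_shift1, z2_ne_flipR', z2_ne_flipL', not_not]
      have e10 : Fintype.card {t // sigma (m+1+1) (cons2 (m+1) 1 0 t) ≠ sigma (m+1+1) (cons2 (m+1) 1 0 t + cons2 (m+1) 0 0 b')}
          = Fintype.card {t // sigma (m+1) t ≠ sigma (m+1) (t + b')} :=
        card_congr' fun t => by simp only [cons2_add, add_zero, zero_add, z2_11, sigma_cons2_00, sigma_cons2_01, sigma_cons2_10, sigma_cons2_11, z2_ne_shift1, z2_ne_flipR', z2_ne_flipL', not_not]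
      have e11 : Fintype.card {t // sigma (m+1+1) (cons2 (m+1) 1 1 t) ≠ sigma (m+1+1) (cons2 (m+1) 1 1 t + cons2 (m+1) 0 0 b')}
          = Fintype.card {t // sigma (m+1) t ≠ sigma (m+1) (t + b')} :=
        card_congr' fun t => by simp only [cons2_add, add_zero, zero_add, z2_11, sigma_cons2_00, sigma_cons2_01, sigma_cons2_10, sigma_cons2_11, z2_ne_shift1, z2_ne_flipR', z2_ne_flipL', not_not]
      rw [e00, e01, e10, e11, ih b' hb']
      have h1 : (2:ℕ) ^ (2 * (m+1) - 1) = 2 * 4 ^ m := by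
        rw [show 2*(m+1)-1 = 2*m+1 by omega, pow_succ, pow_mul]
        norm_num [mul_comm]
      have h2 : (4:ℕ) ^ (m+1) = 4 * 4 ^ m := by rw [pow_succ]; ring
      omega
    · -- d = (0,1)
      have e00 : Fintype.card {t // sigma (m+1) (cons2 m 0 0 t) ≠ sigma (m+1) (cons2 m 0 0 t + cons2 m 0 1 b')}
          = Fintype.card {t // ¬ (sigma m t ≠ sigma m (t + b'))} :=
        card_congr' fun t => by simp only [cons2_add, add_zero, zero_add, z2_11, sigma_cons2_00, sigma_cons2_01, sigma_cons2_10, sigma_cons2_11, z2_ne_shift1, z2_ne_flipR', z2_ne_flipL', not_not]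
      have e01 : Fintype.card {t // sigma (m+1) (cons2 m 0 1 t) ≠ sigma (m+1) (cons2 m 0 1 t + cons2 m 0 1 b')}
          = Fintype.card {t // ¬ (sigma m t ≠ sigma m (t + b'))} :=
        card_congr' fun t => by simp only [cons2_add, add_zero, zero_add, z2_11, sigma_cons2_00, sigma_cons2_01, sigma_cons2_10, sigma_cons2_11, z2_ne_shift1, z2_ne_flipR', z2_ne_flipL', not_not]
      have e10 : Fintype.card {t // sigma (m+1) (cons2 m 1 0 t) ≠ sigma (m+1) (cons2 m 1 0 t + cons2 m 0 1 b')}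
          = Fintype.card {t // sigma m t ≠ sigma m (t + b')} :=
        card_congr' fun t => by simp only [cons2_add, add_zero, zero_add, z2_11, sigma_cons2_00, sigma_cons2_01, sigma_cons2_10, sigma_cons2_11, z2_ne_shift1, z2_ne_flipR', z2_ne_flipL', not_not]
      have e11 : Fintype.card {t // sigma (m+1) (cons2 m 1 1 t) ≠ sigma (m+1) (cons2 m 1 1 t + cons2 m 0 1 b')}
          = Fintype.card {t // sigma m t ≠ sigma m (t + b')} :=
        card_congr' fun t => by simp only [cons2_add, add_zero, zero_add, z2_11, sigma_cons2_00, sigma_cons2_01, sigma_cons2_10, sigma_cons2_11, z2_ne_shift1, z2_ne_flipR', z2_ne_flipL', not_not]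
      rw [e00, e01, e10, e11, hc]
      have h2 : (4:ℕ) ^ (m+1) = 4 * 4 ^ m := by rw [pow_succ]; ring
      omega
    · -- d = (1,0)
      have e00 : Fintype.card {t // sigma (m+1) (cons2 m 0 0 t) ≠ sigma (m+1) (cons2 m 0 0 t + cons2 m 1 0 b')}
          = Fintype.card {t // sigma m t ≠ sigma m (t + b')} :=
        card_congr' fun t => by simp only [cons2_add, add_zero, zero_add, z2_11, sigma_cons2_00, sigma_cons2_01, sigma_cons2_10, sigma_cons2_11, z2_ne_shift1, z2_ne_flipR', z2_ne_flipL', not_not]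
      have e01 : Fintype.card {t // sigma (m+1) (cons2 m 0 1 t) ≠ sigma (m+1) (cons2 m 0 1 t + cons2 m 1 0 b')}
          = Fintype.card {t // ¬ (sigma m t ≠ sigma m (t + b'))} :=
        card_congr' fun t => by simp only [cons2_add, add_zero, zero_add, z2_11, sigma_cons2_00, sigma_cons2_01, sigma_cons2_10, sigma_cons2_11, z2_ne_shift1, z2_ne_flipR', z2_ne_flipL', not_not]
      have e10 : Fintype.card {t // sigma (m+1) (cons2 m 1 0 t) ≠ sigma (m+1) (cons2 m 1 0 t + cons2 m 1 0 b')}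
          = Fintype.card {t // sigma m t ≠ sigma m (t + b')} :=
        card_congr' fun t => by simp only [cons2_add, add_zero, zero_add, z2_11, sigma_cons2_00, sigma_cons2_01, sigma_cons2_10, sigma_cons2_11, z2_ne_shift1, z2_ne_flipR', z2_ne_flipL', not_not]
      have e11 : Fintype.card {t // sigma (m+1) (cons2 m 1 1 t) ≠ sigma (m+1) (cons2 m 1 1 t + cons2 m 1 0 b')}
          = Fintype.card {t // ¬ (sigma m t ≠ sigma m (t + b'))} :=
        card_congr' fun t => by simp only [cons2_add, add_zero, zero_add, z2_11, sigma_cons2_00, sigma_cons2_01, sigma_cons2_10, sigma_cons2_11, z2_ne_shift1, z2_ne_flipR', z2_ne_flipL', not_not]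
      rw [e00, e01, e10, e11, hc]
      have h2 : (4:ℕ) ^ (m+1) = 4 * 4 ^ m := by rw [pow_succ]; ring
      omega
    · -- d = (1,1)
      have e00 : Fintype.card {t // sigma (m+1) (cons2 m 0 0 t) ≠ sigma (m+1) (cons2 m 0 0 t + cons2 m 1 1 b')}
          = Fintype.card {t // sigma m t ≠ sigma m (t + b')} :=
        card_congr' fun t => by simp only [cons2_add, add_zero, zero_add, z2_11, sigma_cons2_00, sigma_cons2_01, sigma_cons2_10, sigma_cons2_11, z2_ne_shift1, z2_ne_flipR', z2_ne_flipL', not_not]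
      have e01 : Fintype.card {t // sigma (m+1) (cons2 m 0 1 t) ≠ sigma (m+1) (cons2 m 0 1 t + cons2 m 1 1 b')}
          = Fintype.card {t // ¬ (sigma m t ≠ sigma m (t + b'))} :=
        card_congr' fun t => by simp only [cons2_add, add_zero, zero_add, z2_11, sigma_cons2_00, sigma_cons2_01, sigma_cons2_10, sigma_cons2_11, z2_ne_shift1, z2_ne_flipR', z2_ne_flipL', not_not]
      have e10 : Fintype.card {t // sigma (m+1) (cons2 m 1 0 t) ≠ sigma (m+1) (cons2 m 1 0 t + cons2 m 1 1 b')}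
          = Fintype.card {t // ¬ (sigma m t ≠ sigma m (t + b'))} :=
        card_congr' fun t => by simp only [cons2_add, add_zero, zero_add, z2_11, sigma_cons2_00, sigma_cons2_01, sigma_cons2_10, sigma_cons2_11, z2_ne_shift1, z2_ne_flipR', z2_ne_flipL', not_not]
      have e11 : Fintype.card {t // sigma (m+1) (cons2 m 1 1 t) ≠ sigma (m+1) (cons2 m 1 1 t + cons2 m 1 1 b')}
          = Fintype.card {t // sigma m t ≠ sigma m (t + b')} :=
        card_congr' fun t => by simp only [cons2_add, add_zero, zero_add, z2_11, sigma_cons2_00, sigma_cons2_01, sigma_cons2_10, sigma_cons2_11, z2_ne_shift1, z2_ne_flipR', z2_ne_flipL', not_not]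
      rw [e00, e01, e10, e11, hc]
      have h2 : (4:ℕ) ^ (m+1) = 4 * 4 ^ m := by rw [pow_succ]; ring
      omega

lemma pow_fact2 (m : ℕ) : (4:ℕ) ^ (m+1) = 4 * 4 ^ m := by rw [pow_succ]; ring

lemma pow_fact3 (m : ℕ) : (2:ℕ) ^ (2 * (m+1) - 1) = 2 * 4 ^ m := by
  rw [show 2*(m+1)-1 = 2*m+1 by omega, pow_succ, pow_mul]
  norm_num [mul_comm]

lemma pow_fact1 (m : ℕ) (hm : 1 ≤ m) : 2 * 2 ^ (2 * m - 1) = 4 ^ m := by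
  obtain ⟨k, rfl⟩ : ∃ k, m = k + 1 := ⟨m - 1, by omega⟩
  rw [pow_fact3 k, show (4:ℕ)^(k+1) = 4*4^k from pow_fact2 k]
  ring

lemma tau_deriv (m : ℕ) (b : Fin (2 * m) → ZMod 2) (hb : b ≠ 0) :
    Fintype.card {t // tau m t ≠ tau m (t + b)} = 2 ^ (2 * m - 1) := by
  induction m with
  | zero => exact absurd (funext fun j => absurd j.2 (by omega)) hb
  | succ m ih =>
    obtain ⟨⟨⟨d0, d1⟩, b'⟩, rfl⟩ := (consEquiv m).surjective b
    simp only [consEquiv, Equiv.coe_fn_mk] at hb ⊢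
    erw [card_split m (fun x => tau (m+1) x ≠ tau (m+1) (x + cons2 m d0 d1 b'))]
    have hX := card_le' m (fun t => tau m t ≠ sigma m (t + b'))
    have hY := card_le' m (fun t => sigma m t ≠ tau m (t + b'))
    have hA := card_le' m (fun t => sigma m t ≠ sigma m (t + b'))
    have hcX := card_compl' m (fun t => tau m t ≠ sigma m (t + b'))
    have hcY := card_compl' m (fun t => sigma m t ≠ tau m (t + b'))
    have hcA := card_compl' m (fun t => sigma m t ≠ sigma m (t + b'))
    rcases z2_cases d0 with rfl | rfl <;> rcases z2_cases d1 with rfl | rfl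
    · -- d = (0,0); b' ≠ 0
      have hb' : b' ≠ 0 := fun h => hb (by rw [h, cons2_zero_zero_zero])
      have e00 : Fintype.card {t // tau (m+1) (cons2 m 0 0 t) ≠ tau (m+1) (cons2 m 0 0 t + cons2 m 0 0 b')}
          = Fintype.card {t // tau m t ≠ tau m (t + b')} :=
        card_congr' fun t => by simp only [cons2_add, add_zero, zero_add, z2_11, tau_cons2_00, tau_cons2_01, tau_cons2_10, tau_cons2_11, sigma_cons2_00, sigma_cons2_01, sigma_cons2_10, sigma_cons2_11, z2_ne_shift1, z2_ne_shift1', z2_ne_mix, z2_ne_mix', z2_ne_flipR, z2_ne_flipR', z2_ne_flipL, z2_ne_flipL', not_not]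
      have e01 : Fintype.card {t // tau (m+1) (cons2 m 0 1 t) ≠ tau (m+1) (cons2 m 0 1 t + cons2 m 0 0 b')}
          = Fintype.card {t // sigma m t ≠ sigma m (t + b')} :=
        card_congr' fun t => by simp only [cons2_add, add_zero, zero_add, z2_11, tau_cons2_00, tau_cons2_01, tau_cons2_10, tau_cons2_11, sigma_cons2_00, sigma_cons2_01, sigma_cons2_10, sigma_cons2_11, z2_ne_shift1, z2_ne_shift1', z2_ne_mix, z2_ne_mix', z2_ne_flipR, z2_ne_flipR', z2_ne_flipL, z2_ne_flipL', not_not]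
      have e10 : Fintype.card {t // tau (m+1) (cons2 m 1 0 t) ≠ tau (m+1) (cons2 m 1 0 t + cons2 m 0 0 b')}
          = Fintype.card {t // sigma m t ≠ sigma m (t + b')} :=
        card_congr' fun t => by simp only [cons2_add, add_zero, zero_add, z2_11, tau_cons2_00, tau_cons2_01, tau_cons2_10, tau_cons2_11, sigma_cons2_00, sigma_cons2_01, sigma_cons2_10, sigma_cons2_11, z2_ne_shift1, z2_ne_shift1', z2_ne_mix, z2_ne_mix', z2_ne_flipR, z2_ne_flipR', z2_ne_flipL, z2_ne_flipL', not_not]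
      have e11 : Fintype.card {t // tau (m+1) (cons2 m 1 1 t) ≠ tau (m+1) (cons2 m 1 1 t + cons2 m 0 0 b')}
          = Fintype.card {t // tau m t ≠ tau m (t + b')} :=
        card_congr' fun t => by simp only [cons2_add, add_zero, zero_add, z2_11, tau_cons2_00, tau_cons2_01, tau_cons2_10, tau_cons2_11, sigma_cons2_00, sigma_cons2_01, sigma_cons2_10, sigma_cons2_11, z2_ne_shift1, z2_ne_shift1', z2_ne_mix, z2_ne_mix', z2_ne_flipR, z2_ne_flipR', z2_ne_flipL, z2_ne_flipL', not_not]
      rw [e00, e01, e10, e11, ih b' hb', sigma_deriv m b' hb']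
      have hm : 1 ≤ m := by
        by_contra h
        exact hb' (by
          have : m = 0 := by omega
          subst this
          exact funext fun j => absurd j.2 (by omega))
      have h1 := pow_fact1 m hm
      have h3 := pow_fact3 m
      omega
    · -- d = (0,1)
      have e00 : Fintype.card {t // tau (m+1) (cons2 m 0 0 t) ≠ tau (m+1) (cons2 m 0 0 t + cons2 m 0 1 b')}
          = Fintype.card {t // tau m t ≠ sigma m (t + b')} :=
        card_congr' fun t => by simp only [cons2_add, add_zero, zero_add, z2_11, tau_cons2_00, tau_cons2_01, tau_cons2_10, tau_cons2_11, sigma_cons2_00, sigma_cons2_01, sigma_cons2_10, sigma_cons2_11, z2_ne_shift1, z2_ne_shift1', z2_ne_mix, z2_ne_mix', z2_ne_flipR, z2_ne_flipR', z2_ne_flipL, z2_ne_flipL', not_not]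
      have e01 : Fintype.card {t // tau (m+1) (cons2 m 0 1 t) ≠ tau (m+1) (cons2 m 0 1 t + cons2 m 0 1 b')}
          = Fintype.card {t // sigma m t ≠ tau m (t + b')} :=
        card_congr' fun t => by simp only [cons2_add, add_zero, zero_add, z2_11, tau_cons2_00, tau_cons2_01, tau_cons2_10, tau_cons2_11, sigma_cons2_00, sigma_cons2_01, sigma_cons2_10, sigma_cons2_11, z2_ne_shift1, z2_ne_shift1', z2_ne_mix, z2_ne_mix', z2_ne_flipR, z2_ne_flipR', z2_ne_flipL, z2_ne_flipL', not_not]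
      have e10 : Fintype.card {t // tau (m+1) (cons2 m 1 0 t) ≠ tau (m+1) (cons2 m 1 0 t + cons2 m 0 1 b')}
          = Fintype.card {t // ¬ (sigma m t ≠ tau m (t + b'))} :=
        card_congr' fun t => by simp only [cons2_add, add_zero, zero_add, z2_11, tau_cons2_00, tau_cons2_01, tau_cons2_10, tau_cons2_11, sigma_cons2_00, sigma_cons2_01, sigma_cons2_10, sigma_cons2_11, z2_ne_shift1, z2_ne_shift1', z2_ne_mix, z2_ne_mix', z2_ne_flipR, z2_ne_flipR', z2_ne_flipL, z2_ne_flipL', not_not]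
      have e11 : Fintype.card {t // tau (m+1) (cons2 m 1 1 t) ≠ tau (m+1) (cons2 m 1 1 t + cons2 m 0 1 b')}
          = Fintype.card {t // ¬ (tau m t ≠ sigma m (t + b'))} :=
        card_congr' fun t => by simp only [cons2_add, add_zero, zero_add, z2_11, tau_cons2_00, tau_cons2_01, tau_cons2_10, tau_cons2_11, sigma_cons2_00, sigma_cons2_01, sigma_cons2_10, sigma_cons2_11, z2_ne_shift1, z2_ne_shift1', z2_ne_mix, z2_ne_mix', z2_ne_flipR, z2_ne_flipR', z2_ne_flipL, z2_ne_flipL', not_not]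
      rw [e00, e01, e10, e11, hcX, hcY]
      have h3 := pow_fact3 m
      omega
    · -- d = (1,0)
      have e00 : Fintype.card {t // tau (m+1) (cons2 m 0 0 t) ≠ tau (m+1) (cons2 m 0 0 t + cons2 m 1 0 b')}
          = Fintype.card {t // ¬ (tau m t ≠ sigma m (t + b'))} :=
        card_congr' fun t => by simp only [cons2_add, add_zero, zero_add, z2_11, tau_cons2_00, tau_cons2_01, tau_cons2_10, tau_cons2_11, sigma_cons2_00, sigma_cons2_01, sigma_cons2_10, sigma_cons2_11, z2_ne_shift1, z2_ne_shift1', z2_ne_mix, z2_ne_mix', z2_ne_flipR, z2_ne_flipR', z2_ne_flipL, z2_ne_flipL', not_not]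
      have e01 : Fintype.card {t // tau (m+1) (cons2 m 0 1 t) ≠ tau (m+1) (cons2 m 0 1 t + cons2 m 1 0 b')}
          = Fintype.card {t // sigma m t ≠ tau m (t + b')} :=
        card_congr' fun t => by simp only [cons2_add, add_zero, zero_add, z2_11, tau_cons2_00, tau_cons2_01, tau_cons2_10, tau_cons2_11, sigma_cons2_00, sigma_cons2_01, sigma_cons2_10, sigma_cons2_11, z2_ne_shift1, z2_ne_shift1', z2_ne_mix, z2_ne_mix', z2_ne_flipR, z2_ne_flipR', z2_ne_flipL, z2_ne_flipL', not_not]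
      have e10 : Fintype.card {t // tau (m+1) (cons2 m 1 0 t) ≠ tau (m+1) (cons2 m 1 0 t + cons2 m 1 0 b')}
          = Fintype.card {t // ¬ (sigma m t ≠ tau m (t + b'))} :=
        card_congr' fun t => by simp only [cons2_add, add_zero, zero_add, z2_11, tau_cons2_00, tau_cons2_01, tau_cons2_10, tau_cons2_11, sigma_cons2_00, sigma_cons2_01, sigma_cons2_10, sigma_cons2_11, z2_ne_shift1, z2_ne_shift1', z2_ne_mix, z2_ne_mix', z2_ne_flipR, z2_ne_flipR', z2_ne_flipL, z2_ne_flipL', not_not]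
      have e11 : Fintype.card {t // tau (m+1) (cons2 m 1 1 t) ≠ tau (m+1) (cons2 m 1 1 t + cons2 m 1 0 b')}
          = Fintype.card {t // tau m t ≠ sigma m (t + b')} :=
        card_congr' fun t => by simp only [cons2_add, add_zero, zero_add, z2_11, tau_cons2_00, tau_cons2_01, tau_cons2_10, tau_cons2_11, sigma_cons2_00, sigma_cons2_01, sigma_cons2_10, sigma_cons2_11, z2_ne_shift1, z2_ne_shift1', z2_ne_mix, z2_ne_mix', z2_ne_flipR, z2_ne_flipR', z2_ne_flipL, z2_ne_flipL', not_not]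
      rw [e00, e01, e10, e11, hcX, hcY]
      have h3 := pow_fact3 m
      omega
    · -- d = (1,1)
      have e00 : Fintype.card {t // tau (m+1) (cons2 m 0 0 t) ≠ tau (m+1) (cons2 m 0 0 t + cons2 m 1 1 b')}
          = Fintype.card {t // tau m t ≠ tau m (t + b')} :=
        card_congr' fun t => by simp only [cons2_add, add_zero, zero_add, z2_11, tau_cons2_00, tau_cons2_01, tau_cons2_10, tau_cons2_11, sigma_cons2_00, sigma_cons2_01, sigma_cons2_10, sigma_cons2_11, z2_ne_shift1, z2_ne_shift1', z2_ne_mix, z2_ne_mix', z2_ne_flipR, z2_ne_flipR', z2_ne_flipL, z2_ne_flipL', not_not]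
      have e01 : Fintype.card {t // tau (m+1) (cons2 m 0 1 t) ≠ tau (m+1) (cons2 m 0 1 t + cons2 m 1 1 b')}
          = Fintype.card {t // ¬ (sigma m t ≠ sigma m (t + b'))} :=
        card_congr' fun t => by simp only [cons2_add, add_zero, zero_add, z2_11, tau_cons2_00, tau_cons2_01, tau_cons2_10, tau_cons2_11, sigma_cons2_00, sigma_cons2_01, sigma_cons2_10, sigma_cons2_11, z2_ne_shift1, z2_ne_shift1', z2_ne_mix, z2_ne_mix', z2_ne_flipR, z2_ne_flipR', z2_ne_flipL, z2_ne_flipL', not_not]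
      have e10 : Fintype.card {t // tau (m+1) (cons2 m 1 0 t) ≠ tau (m+1) (cons2 m 1 0 t + cons2 m 1 1 b')}
          = Fintype.card {t // ¬ (sigma m t ≠ sigma m (t + b'))} :=
        card_congr' fun t => by simp only [cons2_add, add_zero, zero_add, z2_11, tau_cons2_00, tau_cons2_01, tau_cons2_10, tau_cons2_11, sigma_cons2_00, sigma_cons2_01, sigma_cons2_10, sigma_cons2_11, z2_ne_shift1, z2_ne_shift1', z2_ne_mix, z2_ne_mix', z2_ne_flipR, z2_ne_flipR', z2_ne_flipL, z2_ne_flipL', not_not]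
      have e11 : Fintype.card {t // tau (m+1) (cons2 m 1 1 t) ≠ tau (m+1) (cons2 m 1 1 t + cons2 m 1 1 b')}
          = Fintype.card {t // tau m t ≠ tau m (t + b')} :=
        card_congr' fun t => by simp only [cons2_add, add_zero, zero_add, z2_11, tau_cons2_00, tau_cons2_01, tau_cons2_10, tau_cons2_11, sigma_cons2_00, sigma_cons2_01, sigma_cons2_10, sigma_cons2_11, z2_ne_shift1, z2_ne_shift1', z2_ne_mix, z2_ne_mix', z2_ne_flipR, z2_ne_flipR', z2_ne_flipL, z2_ne_flipL', not_not]
      rw [e00, e01, e10, e11, hcA]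
      by_cases hb' : b' = 0
      · subst hb'
        have eT : Fintype.card {t // tau m t ≠ tau m (t + 0)} = 0 := by
          rw [card_congr' (q := fun t : Fin (2*m) → ZMod 2 => tau m t ≠ tau m t) (fun t => by rw [add_zero])]
          simp
        have eA : Fintype.card {t // sigma m t ≠ sigma m (t + 0)} = 0 := by
          rw [card_congr' (q := fun t : Fin (2*m) → ZMod 2 => sigma m t ≠ sigma m t) (fun t => by rw [add_zero])]
          simp
        rw [eT, eA]
        have h3 := pow_fact3 m
        omega
      · rw [ih b' hb', sigma_deriv m b' hb']
        have hm : 1 ≤ m := by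
          by_contra h
          exact hb' (by
            have : m = 0 := by omega
            subst this
            exact funext fun j => absurd j.2 (by omega))
        have h1 := pow_fact1 m hm
        have h3 := pow_fact3 m
        omega

lemma z2_add_one_eq_one (u : ZMod 2) : (u + 1 = 1) ↔ ¬ (u = 1) := by revert u; decide

lemma tau_weight' (m : ℕ) : 2 * Fintype.card {t // tau m t = 1} + 2 ^ m = 4 ^ m := by
  induction m with
  | zero =>
      have : Fintype.card {t : Fin (2*0) → ZMod 2 // tau 0 t = 1} = 0 := by
        rw [Fintype.card_eq_zero_iff]
        exact ⟨fun ⟨t, ht⟩ => by simp [tau] at ht⟩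
      rw [this]
      norm_num
  | succ m ih =>
      rw [card_split m (fun x => tau (m+1) x = 1)]
      have hS := card_le' m (fun t => sigma m t = 1)
      have e00 : Fintype.card {t // tau (m+1) (cons2 m 0 0 t) = 1}
          = Fintype.card {t // tau m t = 1} :=
        card_congr' fun t => by rw [tau_cons2_00]
      have e01 : Fintype.card {t // tau (m+1) (cons2 m 0 1 t) = 1}
          = Fintype.card {t // sigma m t = 1} :=
        card_congr' fun t => by rw [tau_cons2_01]
      have e10 : Fintype.card {t // tau (m+1) (cons2 m 1 0 t) = 1}
          = Fintype.card {t // ¬ (sigma m t = 1)} :=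
        card_congr' fun t => by rw [tau_cons2_10]; exact z2_add_one_eq_one _
      have e11 : Fintype.card {t // tau (m+1) (cons2 m 1 1 t) = 1}
          = Fintype.card {t // tau m t = 1} :=
        card_congr' fun t => by rw [tau_cons2_11]
      rw [e00, e01, e10, e11, card_compl' m (fun t => sigma m t = 1)]
      have h2 := pow_fact2 m
      have h4 : (2:ℕ) ^ (m+1) = 2 * 2 ^ m := by rw [pow_succ]; ring
      omega

lemma tau_weight (m : ℕ) (hm : 1 ≤ m) :
    Fintype.card {t // tau m t = 1} = 2 ^ (2 * m - 1) - 2 ^ (m - 1) := by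
  obtain ⟨k, rfl⟩ : ∃ k, m = k + 1 := ⟨m - 1, by omega⟩
  have h := tau_weight' (k + 1)
  have h3 := pow_fact3 k
  have h2 := pow_fact2 k
  have h4 : (2:ℕ) ^ (k + 1) = 2 * 2 ^ k := by rw [pow_succ]; ring
  rw [show k + 1 - 1 = k by omega, h3]
  omega

lemma vadd_self (m : ℕ) (x : Fin (2 * m) → ZMod 2) : x + x = 0 := by
  funext j; exact CharTwo.add_self_eq_zero _

lemma tau_pair (m : ℕ) (hm : 1 ≤ m) (a : Fin (2 * m) → ZMod 2) (ha : a ≠ 0) :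
    Fintype.card {u // tau m u = 1 ∧ tau m (u + a) = 1} = 2 ^ (2 * m - 2) - 2 ^ (m - 1) := by
  have haa := vadd_self m a
  -- split the weight
  have hsplit : Fintype.card {u // tau m u = 1 ∧ tau m (u + a) = 1}
      + Fintype.card {u // tau m u = 1 ∧ ¬ (tau m (u + a) = 1)}
      = Fintype.card {u // tau m u = 1} := by
    simp only [Fintype.card_subtype]
    rw [← Finset.filter_filter, ← Finset.filter_filter]
    exact Finset.card_filter_add_card_filter_not _
  -- split the derivative count
  have hsplit2 : Fintype.card {u // tau m u ≠ tau m (u + a) ∧ tau m u = 1}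
      + Fintype.card {u // tau m u ≠ tau m (u + a) ∧ ¬ (tau m u = 1)}
      = Fintype.card {u // tau m u ≠ tau m (u + a)} := by
    simp only [Fintype.card_subtype]
    rw [← Finset.filter_filter, ← Finset.filter_filter]
    exact Finset.card_filter_add_card_filter_not _
  have hz1 : ∀ x y : ZMod 2, (x ≠ y ∧ x = 1) ↔ (x = 1 ∧ ¬ (y = 1)) := by decide
  have hz2 : ∀ x y : ZMod 2, (x ≠ y ∧ ¬ (x = 1)) ↔ (¬ (x = 1) ∧ y = 1) := by decide
  have c1 : Fintype.card {u // tau m u ≠ tau m (u + a) ∧ tau m u = 1}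
      = Fintype.card {u // tau m u = 1 ∧ ¬ (tau m (u + a) = 1)} :=
    card_congr' fun u => hz1 _ _
  have c2 : Fintype.card {u // tau m u ≠ tau m (u + a) ∧ ¬ (tau m u = 1)}
      = Fintype.card {u // ¬ (tau m u = 1) ∧ tau m (u + a) = 1} :=
    card_congr' fun u => hz2 _ _
  -- the reflection bijection u ↦ u + a
  have c3 : Fintype.card {u // tau m u = 1 ∧ ¬ (tau m (u + a) = 1)}
      = Fintype.card {u // ¬ (tau m u = 1) ∧ tau m (u + a) = 1} :=
    Fintype.card_congr ((Equiv.addRight a).subtypeEquiv (fun u => by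
      have hu : u + a + a = u := by rw [add_assoc, haa, add_zero]
      simp only [Equiv.coe_addRight, hu]
      exact and_comm))
  have hD := tau_deriv m a ha
  have hW := tau_weight m hm
  rw [hD] at hsplit2
  rw [hW] at hsplit
  obtain ⟨k, rfl⟩ : ∃ k, m = k + 1 := ⟨m - 1, by omega⟩
  have h3 := pow_fact3 k
  have h2 := pow_fact2 k
  have h5 : (2:ℕ) ^ (2 * (k+1) - 2) = 4 ^ k := by
    rw [show 2*(k+1)-2 = 2*k by omega, pow_mul]; norm_num
  have h6 : (2:ℕ) ^ k ≤ 4 ^ k := Nat.pow_le_pow_left (by norm_num) k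
  rw [show k + 1 - 1 = k by omega] at *
  rw [h5]
  omega

/-- The Cayley graph of `τ_m` is strongly regular with parameters
`v = 4^m`, `k = 2^{2m-1} - 2^{m-1}`, `λ = μ = 2^{2m-2} - 2^{m-1}`. -/
theorem cayley_tau_isSRG (m : ℕ) (hm : 1 ≤ m) :
    (cayley (2 * m) (tau m)).IsSRGWith (4 ^ m) (2 ^ (2 * m - 1) - 2 ^ (m - 1))
      (2 ^ (2 * m - 2) - 2 ^ (m - 1)) (2 ^ (2 * m - 2) - 2 ^ (m - 1)) := by
  set G := cayley (2 * m) (tau m) with hG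
  have hAdj : ∀ v w, G.Adj v w ↔ (v ≠ w ∧ tau m (v + w) = 1) := fun v w => Iff.rfl
  have hne_of : ∀ v w : Fin (2*m) → ZMod 2, v ≠ w → v + w ≠ 0 := by
    intro v w hvw h
    apply hvw
    have h2 : v + (v + w) = v + 0 := by rw [h]
    rw [← add_assoc, vadd_self, zero_add, add_zero] at h2
    exact h2.symm
  have key : ∀ v w : Fin (2*m) → ZMod 2, v ≠ w →
      Fintype.card (G.commonNeighbors v w) = 2 ^ (2 * m - 2) - 2 ^ (m - 1) := by
    intro v w hvw
    have e : Fintype.card (G.commonNeighbors v w)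
        = Fintype.card {u // tau m u = 1 ∧ tau m (u + (v + w)) = 1} := by
      apply Fintype.card_congr
      refine Equiv.trans (Equiv.subtypeEquivRight (q := fun z => G.Adj v z ∧ G.Adj w z)
        (fun z => SimpleGraph.mem_commonNeighbors G)) ?_
      refine (Equiv.addLeft v).subtypeEquiv (fun z => ?_)
      simp only [Equiv.coe_addLeft]
      have h1 : v + z + (v + w) = w + z := by
        rw [add_add_add_comm, vadd_self, zero_add, add_comm]
      rw [h1]
      constructor
      · rintro ⟨⟨_, h2⟩, ⟨_, h3⟩⟩; exact ⟨h2, h3⟩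
      · rintro ⟨h2, h3⟩
        refine ⟨⟨?_, h2⟩, ⟨?_, h3⟩⟩
        · intro hv; rw [← hv, vadd_self] at h2; rw [tau_zero] at h2; exact one_ne_zero h2.symm
        · intro hw; rw [← hw, vadd_self] at h3; rw [tau_zero] at h3; exact one_ne_zero h3.symm
    rw [e]
    exact tau_pair m hm (v + w) (hne_of v w hvw)
  constructor
  · exact card_V m
  · intro v
    have hdeg : G.degree v = Fintype.card {u // tau m u = 1} := by
      rw [Fintype.card_subtype]
      apply Finset.card_bij (fun w _ => v + w)
      · intro w hw
        rw [SimpleGraph.mem_neighborFinset] at hw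
        rw [Finset.mem_filter]
        exact ⟨Finset.mem_univ _, hw.2⟩
      · intro w1 _ w2 _ h
        exact add_left_cancel h
      · intro u hu
        rw [Finset.mem_filter] at hu
        refine ⟨v + u, ?_, by rw [← add_assoc, vadd_self, zero_add]⟩
        rw [SimpleGraph.mem_neighborFinset]
        refine ⟨?_, by rw [← add_assoc, vadd_self, zero_add]; exact hu.2⟩
        intro h
        have h2 : v + v = v + (v + u) := by rw [← h]
        rw [vadd_self, ← add_assoc, vadd_self, zero_add] at h2
        rw [← h2, tau_zero] at hu
        exact one_ne_zero hu.2.symm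
    rw [hdeg, tau_weight m hm]
  · intro v w hadj
    exact key v w hadj.ne
  · intro v w hne _
    exact key v w hne
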